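/- Fix positive integers n, b, ℓ, a frequency vector f : Fin n → ℕ with total mass m = Σ_y f(y), and a probability distribution μ on functions h : Fin n → Fin b with collision probability at most 1/b. Let (h₁,…,h_ℓ) be drawn from the ℓ-fold product measure μ^⊗ℓ (independent samples). Then for every x ∈ Fin n: (i) with probability 1, min_{1 ≤ i ≤ ℓ} T_{h_i}(h_i(x)) ≥ f(x); and (ii) Pr[min_{1 ≤ i ≤ ℓ} T_{h_i}(h_i(x)) > f(x) + 2m/b] ≤ 2^{−ℓ}, where the comparison is between real numbers. -/

import Mathlib

open scoped Classical BigOperators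

/-- The counter table of a Count-Min row: `cmTable n b f h j` is the total frequency of
all items hashed by `h` to bin `j`. -/
def cmTable (n b : ℕ) (f : Fin n → ℕ) (h : Fin n → Fin b) (j : Fin b) : ℕ :=
  ∑ y ∈ Finset.univ.filter (fun y => h y = j), f y

/-- Count-Min sketch guarantee: with `ℓ` hash functions drawn independently from a
distribution with collision probability at most `1/b` (the `ℓ`-fold product measure,
expressed by the product weights `∏ i, μ (H i)`): (i) with probability 1 the minimum
counter `min_i T_{h_i}(h_i x)` is at least `f x`; (ii) the probability that the minimum
counter exceeds `f x + 2m/b` is at most `2^{-ℓ}`. -/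
theorem count_min_guarantee (n b ℓ : ℕ) (hn : 0 < n) (hb : 0 < b) (hℓ : 0 < ℓ)
    (f : Fin n → ℕ) (μ : (Fin n → Fin b) → ℝ)
    (hpos : ∀ h, 0 ≤ μ h) (hsum : (∑ h : Fin n → Fin b, μ h) = 1)
    (hcoll : ∀ x y : Fin n, x ≠ y →
      (∑ h : Fin n → Fin b, if h x = h y then μ h else 0) ≤ 1 / (b : ℝ)) :
    ∀ x : Fin n,
      ((∑ H ∈ Finset.univ.filter (fun H : Fin ℓ → Fin n → Fin b =>
          f x ≤ Finset.univ.inf' ⟨⟨0, hℓ⟩, Finset.mem_univ _⟩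
            (fun i => cmTable n b f (H i) (H i x))),
          ∏ i, μ (H i)) = 1) ∧
      ((∑ H ∈ Finset.univ.filter (fun H : Fin ℓ → Fin n → Fin b =>
          (f x : ℝ) + 2 * ((∑ y : Fin n, f y : ℕ) : ℝ) / (b : ℝ) <
            ((Finset.univ.inf' ⟨⟨0, hℓ⟩, Finset.mem_univ _⟩
              (fun i => cmTable n b f (H i) (H i x)) : ℕ) : ℝ)),
          ∏ i, μ (H i)) ≤ 1 / 2 ^ ℓ) := by
  intro x
  have fx_le : ∀ h : Fin n → Fin b, f x ≤ cmTable n b f h (h x) := by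
    intro h
    exact Finset.single_le_sum (fun y _ => Nat.zero_le _) (by simp)
  constructor
  · have heq : (Finset.univ.filter (fun H : Fin ℓ → Fin n → Fin b =>
        f x ≤ Finset.univ.inf' ⟨⟨0, hℓ⟩, Finset.mem_univ _⟩
          (fun i => cmTable n b f (H i) (H i x)))) = Finset.univ := by
      apply Finset.filter_true_of_mem
      intro H _
      exact Finset.le_inf' _ _ (fun i _ => fx_le (H i))
    rw [heq, show (Finset.univ : Finset (Fin ℓ → Fin n → Fin b))
      = Fintype.piFinset (fun _ => Finset.univ) from (Fintype.piFinset_univ).symm,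
      ← Finset.prod_univ_sum]
    simp [hsum]
  · set m : ℕ := ∑ y : Fin n, f y with hm
    set S := Finset.univ.filter (fun h : Fin n → Fin b =>
      (f x : ℝ) + 2 * (m : ℝ) / b < (cmTable n b f h (h x) : ℝ)) with hS
    have hp0 : 0 ≤ ∑ h ∈ S, μ h := Finset.sum_nonneg (fun h _ => hpos h)
    -- decomposition of cmTable
    have hg : ∀ h : Fin n → Fin b, (cmTable n b f h (h x) : ℝ)
        = (f x : ℝ) + ∑ y ∈ Finset.univ.erase x, (if h y = h x then (f y : ℝ) else 0) := by
      intro h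
      have : (cmTable n b f h (h x) : ℝ)
          = ∑ y : Fin n, (if h y = h x then (f y : ℝ) else 0) := by
        rw [cmTable, Nat.cast_sum, Finset.sum_filter]
      rw [this, ← Finset.add_sum_erase _ _ (Finset.mem_univ x)]
      simp
    have hE : ∑ h : Fin n → Fin b, μ h * (∑ y ∈ Finset.univ.erase x,
        (if h y = h x then (f y : ℝ) else 0)) ≤ (m : ℝ) / b := by
      have : ∑ h : Fin n → Fin b, μ h * (∑ y ∈ Finset.univ.erase x,
          (if h y = h x then (f y : ℝ) else 0))
          = ∑ y ∈ Finset.univ.erase x, (f y : ℝ) *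
            (∑ h : Fin n → Fin b, if h x = h y then μ h else 0) := by
        simp_rw [Finset.mul_sum]
        rw [Finset.sum_comm]
        apply Finset.sum_congr rfl
        intro y _
        apply Finset.sum_congr rfl
        intro h _
        by_cases hxy : h x = h y
        · rw [if_pos hxy, if_pos hxy.symm, mul_comm]
        · rw [if_neg hxy, if_neg (fun e => hxy e.symm), mul_zero, mul_zero]
      rw [this]
      calc ∑ y ∈ Finset.univ.erase x, (f y : ℝ) *
            (∑ h : Fin n → Fin b, if h x = h y then μ h else 0)
          ≤ ∑ y ∈ Finset.univ.erase x, (f y : ℝ) * (1 / b) := by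
            apply Finset.sum_le_sum
            intro y hy
            exact mul_le_mul_of_nonneg_left
              (hcoll x y (Ne.symm (Finset.ne_of_mem_erase hy))) (by positivity)
        _ ≤ ∑ y : Fin n, (f y : ℝ) * (1 / b) := by
            apply Finset.sum_le_sum_of_subset_of_nonneg (Finset.erase_subset _ _)
            intro y _ _; positivity
        _ = (m : ℝ) / b := by
            rw [← Finset.sum_mul, hm]
            push_cast
            ring
    have hp : (∑ h ∈ S, μ h) ≤ 1 / 2 := by
      rcases Nat.eq_zero_or_pos m with hm0 | hm0
      · have : S = ∅ := by
          apply Finset.filter_false_of_mem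
          intro h _
          have hf0 : ∀ y, f y = 0 := fun y =>
            Finset.sum_eq_zero_iff.mp hm0 y (Finset.mem_univ y)
          have : cmTable n b f h (h x) = 0 := by
            simp [cmTable, hf0]
          simp [this, hf0, hm0]
        simp [this]
      · have hmb : (0:ℝ) < (m : ℝ) / b := by positivity
        have key : (∑ h ∈ S, μ h) * (2 * ((m:ℝ)/b)) ≤ (m : ℝ) / b := by
          calc (∑ h ∈ S, μ h) * (2 * ((m:ℝ)/b))
              = ∑ h ∈ S, μ h * (2 * ((m:ℝ)/b)) := by rw [Finset.sum_mul]
            _ ≤ ∑ h ∈ S, μ h * (∑ y ∈ Finset.univ.erase x,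
                (if h y = h x then (f y : ℝ) else 0)) := by
                apply Finset.sum_le_sum
                intro h hh
                apply mul_le_mul_of_nonneg_left _ (hpos h)
                have := (Finset.mem_filter.mp hh).2
                have h2 : (f x : ℝ) + 2 * (m : ℝ) / b < (cmTable n b f h (h x) : ℝ) := this
                rw [hg h, mul_div_assoc] at h2
                linarith
            _ ≤ ∑ h : Fin n → Fin b, μ h * (∑ y ∈ Finset.univ.erase x,
                (if h y = h x then (f y : ℝ) else 0)) := by
                apply Finset.sum_le_sum_of_subset_of_nonneg (Finset.filter_subset _ _)
                intro h _ _
                apply mul_nonneg (hpos h)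
                apply Finset.sum_nonneg
                intro y _
                positivity
            _ ≤ (m : ℝ) / b := hE
        nlinarith [key, hmb]
    have hfilter : (Finset.univ.filter (fun H : Fin ℓ → Fin n → Fin b =>
        (f x : ℝ) + 2 * ((∑ y : Fin n, f y : ℕ) : ℝ) / (b : ℝ) <
          ((Finset.univ.inf' ⟨⟨0, hℓ⟩, Finset.mem_univ _⟩
            (fun i => cmTable n b f (H i) (H i x)) : ℕ) : ℝ)))
        = Fintype.piFinset (fun _ : Fin ℓ => S) := by
      ext H
      simp only [Finset.mem_filter, Finset.mem_univ, true_and, Fintype.mem_piFinset, hS]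
      constructor
      · intro hlt i
        have hle : Finset.univ.inf' ⟨⟨0, hℓ⟩, Finset.mem_univ _⟩
            (fun i => cmTable n b f (H i) (H i x)) ≤ cmTable n b f (H i) (H i x) :=
          Finset.inf'_le _ (Finset.mem_univ i)
        calc (f x : ℝ) + 2 * (m : ℝ) / b < _ := hlt
          _ ≤ (cmTable n b f (H i) (H i x) : ℝ) := by exact_mod_cast hle
      · intro hall
        obtain ⟨i, _, hi⟩ := Finset.exists_mem_eq_inf' ⟨⟨0, hℓ⟩, Finset.mem_univ _⟩
          (fun i => cmTable n b f (H i) (H i x))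
        rw [hi]
        exact hall i
    rw [hfilter, ← Finset.prod_univ_sum]
    calc ∏ _i : Fin ℓ, ∑ h ∈ S, μ h ≤ ∏ _i : Fin ℓ, (1/2 : ℝ) :=
        Finset.prod_le_prod (fun _ _ => hp0) (fun _ _ => hp)
      _ = 1 / 2 ^ ℓ := by simp [div_pow]
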